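/- Let L be a finite meet-semilattice, G a building set of L, α a maximal element of G, and G̃ = (G \ {α}) ∪ {[α,0̂]} the corresponding building set of Bl_α L. Then the map sending a subset N ⊆ G to the subset of G̃ obtained by replacing α by [α,0̂] (and fixing all other elements) is a bijection between the nested subsets of G (with respect to L) and the nested subsets of G̃ (with respect to Bl_α L). -/

import Mathlib

attribute [local instance] Classical.propDecidable

universe u

/-- The set of maximal elements of `G` below `x`. -/
def maxBelow {L : Type u} [PartialOrder L] (G : Set L) (x : L) : Set L :=
  {g | g ∈ G ∧ g ≤ x ∧ ∀ h ∈ G, h ≤ x → g ≤ h → h = g}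

/-- The tuple in the product of lower intervals which is `g` in the coordinate
indexed by `g` and bottom elsewhere. -/
noncomputable def deltaTuple {L : Type u} [PartialOrder L] [OrderBot L] (G : Set L) (x : L)
    (g : maxBelow G x) : (h : maxBelow G x) → Set.Iic (h : L) :=
  fun h => if (h : L) = (g : L) then ⟨(h : L), le_refl _⟩ else ⟨⊥, bot_le⟩

/-- `G` is a (combinatorial) building set: `G` avoids the bottom element, and for every
`x ≠ ⊥` the interval `[⊥, x]` decomposes as the product of the intervals below the maximal
elements of `G` below `x`, via an isomorphism sending delta tuples to the corresponding
maximal elements. -/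
def IsBuilding {L : Type u} [PartialOrder L] [OrderBot L] (G : Set L) : Prop :=
  (∀ g ∈ G, g ≠ ⊥) ∧
  ∀ x : L, x ≠ ⊥ →
    ∃ φ : ((h : maxBelow G x) → Set.Iic (h : L)) ≃o Set.Iic x,
      ∀ g : maxBelow G x, ((φ (deltaTuple G x g) : Set.Iic x) : L) = (g : L)

/-- A subset `N` of a building set `G` is nested if for every finite set of at least two
pairwise incomparable elements of `N`, the join exists and does not belong to `G`. -/
def IsNested {L : Type u} [PartialOrder L] (G N : Set L) : Prop :=
  N ⊆ G ∧ ∀ T : Finset L, ↑T ⊆ N → 2 ≤ T.card →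
    (∀ a ∈ T, ∀ b ∈ T, a ≠ b → ¬ a ≤ b) →
    ∃ j : L, IsLUB (↑T : Set L) j ∧ j ∉ G

/-- The combinatorial blowup of `L` at `α`: elements are either `y ∈ L` with `y ≱ α`
(encoded `(false, y)`), or symbols `[α, y]` for `y ≱ α` such that `y ∨ α` exists in `L`
(encoded `(true, y)`); the order is induced by the product order on `Bool × L`. -/
def Blowup (L : Type u) [PartialOrder L] (α : L) : Type u :=
  {p : Bool × L // ¬ α ≤ p.2 ∧ (p.1 = true → ∃ j : L, IsLUB {α, p.2} j)}

noncomputable instance blowupPartialOrder {L : Type u} [PartialOrder L] (α : L) :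
    PartialOrder (Blowup L α) :=
  inferInstanceAs (PartialOrder
    {p : Bool × L // ¬ α ≤ p.2 ∧ (p.1 = true → ∃ j : L, IsLUB {α, p.2} j)})

/-- The element of the blowup corresponding to `y ∈ L`, `y ≱ α`. -/
def Blowup.mk1 {L : Type u} [PartialOrder L] {α : L} (y : L) (hy : ¬ α ≤ y) : Blowup L α :=
  ⟨(false, y), hy, fun hb => Bool.noConfusion hb⟩

/-- The element `[α, y]` of the blowup, for `y ≱ α` such that `y ∨ α` exists. -/
def Blowup.mk2 {L : Type u} [PartialOrder L] {α : L} (y : L) (hy : ¬ α ≤ y)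
    (hj : ∃ j : L, IsLUB {α, y} j) : Blowup L α :=
  ⟨(true, y), hy, fun _ => hj⟩

/-- Replacing `α` by `[α, ⊥]` in a subset `N` of `L`, viewed inside the blowup. -/
def liftSet {L : Type u} [PartialOrder L] [OrderBot L] (α : L) (N : Set L) :
    Set (Blowup L α) :=
  {w | (w.val.1 = false ∧ w.val.2 ∈ N ∧ w.val.2 ≠ α) ∨
       (w.val = (true, (⊥ : L)) ∧ α ∈ N)}

section AuxLemmas
variable {L : Type u}

lemma exists_isLUB_of_ub [SemilatticeInf L] [Fintype L] {T : Set L}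
    (hbdd : (upperBounds T).Nonempty) : ∃ j : L, IsLUB T j := by
  classical
  have hfin : (upperBounds T).toFinset.Nonempty := by rwa [Set.toFinset_nonempty]
  refine ⟨(upperBounds T).toFinset.inf' hfin id, fun t ht => ?_, fun y hy => ?_⟩
  · exact Finset.le_inf' hfin id (fun b hb => (Set.mem_toFinset.mp hb) ht)
  · exact Finset.inf'_le id (Set.mem_toFinset.mpr hy)

lemma exists_mem_maxBelow [PartialOrder L] [Fintype L] {G : Set L} {g x : L}
    (hg : g ∈ G) (hgx : g ≤ x) : ∃ m ∈ maxBelow G x, g ≤ m := by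
  classical
  set s : Finset L := Finset.univ.filter (fun h => h ∈ G ∧ g ≤ h ∧ h ≤ x) with hs
  have hne : s.Nonempty := ⟨g, by simp [hs, hg, hgx]⟩
  obtain ⟨m, hm, hmax⟩ : ∃ m ∈ s, ∀ x' ∈ s, ¬ m < x' := by
    obtain ⟨m, hm⟩ := Finset.exists_maximal hne
    exact ⟨m, hm.1, fun x' hx' hlt => hlt.not_ge (hm.2 hx' hlt.le)⟩
  simp only [hs, Finset.mem_filter, Finset.mem_univ, true_and] at hm hmax
  refine ⟨m, ⟨hm.1, hm.2.2, ?_⟩, hm.2.1⟩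
  intro h hh hhx hmh
  by_contra hne'
  exact hmax h ⟨hh, hm.2.1.trans hmh, hhx⟩ (lt_of_le_of_ne hmh (Ne.symm hne'))

lemma Blowup.le_def [PartialOrder L] {α : L} (a b : Blowup L α) :
    a ≤ b ↔ a.val.1 ≤ b.val.1 ∧ a.val.2 ≤ b.val.2 := Iff.rfl

end AuxLemmas
section KeyLemma
variable {L : Type u}

lemma maxBelow_eq_of_nested [SemilatticeInf L] [Fintype L] [OrderBot L] {G N : Set L}
    (hG : IsBuilding G) (hN : IsNested G N) (T : Finset L) (hTN : ↑T ⊆ N)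
    (hcard : 2 ≤ T.card)
    (hanti : ∀ a ∈ T, ∀ b ∈ T, a ≠ b → ¬ a ≤ b) {j : L} (hj : IsLUB (↑T : Set L) j) :
    maxBelow G j = ↑T := by
  classical
  have hTG : ∀ t ∈ T, t ∈ G := fun t ht => hN.1 (hTN ht)
  have hTne : T.Nonempty := Finset.card_pos.mp (by omega)
  obtain ⟨t0, ht0⟩ := hTne
  have hj0 : j ≠ ⊥ := by
    intro h
    exact hG.1 t0 (hTG t0 ht0)
      (le_antisymm (h ▸ hj.1 (Finset.mem_coe.mpr ht0)) bot_le)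
  obtain ⟨φ, hφ⟩ := hG.2 j hj0
  have hφ' : ∀ g : maxBelow G j, φ (deltaTuple G j g) = ⟨(g : L), g.2.2.1⟩ :=
    fun g => Subtype.ext (hφ g)
  -- the engine
  have engine : ∀ m₀ : maxBelow G j, ∀ w : L, ∀ hw : w ≤ (m₀ : L),
      (∀ t ∈ T, t ≤ w ∨ ∃ m : maxBelow G j, m ≠ m₀ ∧ t ≤ (m : L)) → w = (m₀ : L) := by
    intro m₀ w hw hcover
    have hwj : w ≤ j := hw.trans m₀.2.2.1
    set v := φ.symm ⟨w, hwj⟩ with hv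
    set u : (h : maxBelow G j) → Set.Iic (h : L) :=
      fun h => if h = m₀ then v h else ⟨(h : L), le_rfl⟩ with hu
    have hvu : v ≤ u := by
      intro h
      by_cases hh : h = m₀
      · simp [hu, hh]
      · simp only [hu, if_neg hh]
        exact (v h).2
    have hzub : ∀ t ∈ T, t ≤ ((φ u : Set.Iic j) : L) := by
      intro t ht
      rcases hcover t ht with htw | ⟨m, hmne, htm⟩
      · have h1 : ((φ v : Set.Iic j) : L) ≤ ((φ u : Set.Iic j) : L) :=
          Subtype.coe_le_coe.mpr (φ.le_iff_le.mpr hvu)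
        have h2 : ((φ v : Set.Iic j) : L) = w := by rw [hv, φ.apply_symm_apply]
        exact htw.trans (h2 ▸ h1)
      · have hdu : deltaTuple G j m ≤ u := by
          intro h
          by_cases hh : (h : L) = (m : L)
          · rw [deltaTuple]
            simp only [if_pos hh]
            have hhm : h = m := Subtype.ext hh
            have : ¬ h = m₀ := by rw [hhm]; exact hmne
            simp only [hu, if_neg this]
            exact le_rfl
          · rw [deltaTuple]
            simp only [if_neg hh]
            exact bot_le
        have h3 : φ (deltaTuple G j m) ≤ φ u := φ.le_iff_le.mpr hdu
        rw [hφ' m] at h3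
        exact htm.trans (Subtype.coe_le_coe.mpr h3)
    have hjz : φ u = ⟨j, le_rfl⟩ := by
      refine Subtype.ext (le_antisymm (φ u).2 ?_)
      exact hj.2 (fun t ht => hzub t (Finset.mem_coe.mp ht))
    have hu_eq : u = φ.symm ⟨j, le_rfl⟩ := by rw [← hjz, φ.symm_apply_apply]
    have htop : ∀ h : maxBelow G j, u h = ⟨(h : L), le_rfl⟩ := by
      intro h
      have h1 : deltaTuple G j h ≤ u := by
        rw [hu_eq]
        have : φ (deltaTuple G j h) ≤ φ (φ.symm ⟨j, le_rfl⟩) := by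
          rw [hφ' h, φ.apply_symm_apply]
          exact Subtype.mk_le_mk.mpr h.2.2.1
        exact φ.le_iff_le.mp this
      have h2 := h1 h
      rw [deltaTuple] at h2
      simp only [if_pos rfl] at h2
      exact le_antisymm (Subtype.mk_le_mk.mpr (u h).2) h2
    have hvd : v ≤ deltaTuple G j m₀ := by
      have : φ v ≤ φ (deltaTuple G j m₀) := by
        rw [hv, φ.apply_symm_apply, hφ' m₀]
        exact Subtype.mk_le_mk.mpr hw
      exact φ.le_iff_le.mp this
    have hveq : v = deltaTuple G j m₀ := by
      funext h
      by_cases hh : h = m₀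
      · have h1 : u h = v h := by simp [hu, hh]
        rw [deltaTuple]
        simp only [if_pos (show (h:L) = (m₀:L) from congrArg _ hh)]
        rw [← h1, htop h]
      · have hh' : ¬ (h : L) = (m₀ : L) := fun hc => hh (Subtype.ext hc)
        have h2 := hvd h
        rw [deltaTuple] at h2 ⊢
        simp only [if_neg hh'] at h2 ⊢
        exact le_antisymm h2 (Subtype.mk_le_mk.mpr bot_le)
    have : (⟨w, hwj⟩ : Set.Iic j) = ⟨(m₀ : L), m₀.2.2.1⟩ := by
      rw [← φ.apply_symm_apply ⟨w, hwj⟩, ← hv, hveq, hφ' m₀]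
    exact congrArg Subtype.val this
  -- step 1 : every maximal element below j belongs to T
  have step1 : ∀ m₀ : maxBelow G j, (m₀ : L) ∈ T := by
    intro m₀
    set Tm := T.filter (fun t => t ≤ (m₀ : L)) with hTmdef
    have hTmsub : ∀ t ∈ Tm, t ∈ T ∧ t ≤ (m₀ : L) := by
      intro t ht; exact Finset.mem_filter.mp ht
    have hTmne : Tm.Nonempty := by
      by_contra hne
      have hcover : ∀ t ∈ T, t ≤ (⊥ : L) ∨ ∃ m : maxBelow G j, m ≠ m₀ ∧ t ≤ (m : L) := by
        intro t ht
        right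
        obtain ⟨m, hm, htm⟩ := exists_mem_maxBelow (hTG t ht) (hj.1 (Finset.mem_coe.mpr ht))
        refine ⟨⟨m, hm⟩, ?_, htm⟩
        intro hc
        apply hne
        refine ⟨t, Finset.mem_filter.mpr ⟨ht, ?_⟩⟩
        rw [← congrArg Subtype.val hc]; exact htm
      have := engine m₀ ⊥ bot_le hcover
      exact hG.1 (m₀ : L) m₀.2.1 this.symm
    obtain ⟨w, hwlub, hwG⟩ : ∃ w, IsLUB (↑Tm : Set L) w ∧ (2 ≤ Tm.card → w ∉ G) := by
      rcases eq_or_lt_of_le (Finset.one_le_card.mpr hTmne) with h1 | h2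
      · obtain ⟨t, ht⟩ := Finset.card_eq_one.mp h1.symm
        refine ⟨t, ?_, ?_⟩
        · rw [ht]; simp
        · intro hc; rw [← h1] at hc; omega
      · obtain ⟨w, hw1, hw2⟩ := hN.2 Tm
          (fun t ht => hTN (Finset.mem_coe.mpr (hTmsub t (Finset.mem_coe.mp ht)).1))
          h2
          (fun a ha b hb hab => hanti a (hTmsub a ha).1 b (hTmsub b hb).1 hab)
        exact ⟨w, hw1, fun _ => hw2⟩
    have hwm₀ : w ≤ (m₀ : L) :=
      hwlub.2 (fun t ht => (hTmsub t (Finset.mem_coe.mp ht)).2)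
    have hcover : ∀ t ∈ T, t ≤ w ∨ ∃ m : maxBelow G j, m ≠ m₀ ∧ t ≤ (m : L) := by
      intro t ht
      by_cases htm₀ : t ≤ (m₀ : L)
      · exact Or.inl (hwlub.1 (Finset.mem_coe.mpr (Finset.mem_filter.mpr ⟨ht, htm₀⟩)))
      · right
        obtain ⟨m, hm, htm⟩ := exists_mem_maxBelow (hTG t ht) (hj.1 (Finset.mem_coe.mpr ht))
        exact ⟨⟨m, hm⟩, fun hc => htm₀ (by rw [← congrArg Subtype.val hc]; exact htm), htm⟩
    have hw_eq : w = (m₀ : L) := engine m₀ w hwm₀ hcover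
    have hcard1 : Tm.card = 1 := by
      by_contra h
      have h2 : 2 ≤ Tm.card := by
        have := Finset.one_le_card.mpr hTmne; omega
      exact hwG h2 (hw_eq ▸ m₀.2.1)
    obtain ⟨t, ht⟩ := Finset.card_eq_one.mp hcard1
    have htw : t = w := by
      rw [ht] at hwlub
      simp only [Finset.coe_singleton] at hwlub
      exact le_antisymm (hwlub.1 rfl) (hwlub.2 (by simp))
    have : t ∈ T := (hTmsub t (ht ▸ Finset.mem_singleton_self t)).1
    rwa [htw, hw_eq] at this
  ext x
  simp only [Finset.coe_sort_coe, Set.mem_setOf_eq, Finset.mem_coe]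
  constructor
  · intro hx
    exact step1 ⟨x, hx⟩
  · intro hx
    obtain ⟨m, hm, hxm⟩ := exists_mem_maxBelow (hTG x hx) (hj.1 (Finset.mem_coe.mpr hx))
    have hmT : m ∈ T := step1 ⟨m, hm⟩
    by_cases hxm' : x = m
    · exact hxm' ▸ hm
    · exact absurd hxm (hanti x hx m hmT hxm')

end KeyLemma
section Main
variable {L : Type u}

lemma isLUB_pair_bot [PartialOrder L] [OrderBot L] (α : L) : IsLUB {α, (⊥:L)} α :=
  ⟨by rintro x (rfl | hx) <;> simp_all, fun y hy => hy (Set.mem_insert _ _)⟩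

lemma lift_nested [SemilatticeInf L] [Fintype L] [OrderBot L] {G : Set L}
    (hG : IsBuilding G) {α : L} (hαG : α ∈ G) (hαmax : ∀ g ∈ G, α ≤ g → g = α)
    {N : Set L} (hN : IsNested G N) : IsNested (liftSet α G) (liftSet α N) := by
  classical
  have hαbot : α ≠ ⊥ := hG.1 α hαG
  have hαnle : ∀ y ∈ G, y ≠ α → ¬ α ≤ y := fun y hy hne hle => hne (hαmax y hy hle)
  constructor
  · rintro w (⟨h1, h2, h3⟩ | ⟨h1, h2⟩)
    · exact Or.inl ⟨h1, hN.1 h2, h3⟩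
    · exact Or.inr ⟨h1, hαG⟩
  intro S hSN hScard hSanti
  -- the false parts
  set T : Finset L := (S.filter (fun w => w.val.1 = false)).image (fun w => w.val.2) with hTdef
  have hmemT : ∀ y, y ∈ T ↔ ∃ w ∈ S, w.val = (false, y) := by
    intro y
    simp only [hTdef, Finset.mem_image, Finset.mem_filter]
    constructor
    · rintro ⟨w, ⟨hwS, hw1⟩, hw2⟩
      exact ⟨w, hwS, Prod.ext hw1 hw2⟩
    · rintro ⟨w, hwS, hw⟩
      exact ⟨w, ⟨hwS, by rw [hw]⟩, by rw [hw]⟩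
  have hTN : ∀ y ∈ T, y ∈ N ∧ y ≠ α ∧ ¬ α ≤ y := by
    intro y hy
    obtain ⟨w, hwS, hw⟩ := (hmemT y).mp hy
    rcases hSN (Finset.mem_coe.mpr hwS) with ⟨_, h2, h3⟩ | ⟨h1, _⟩
    · rw [hw] at h2 h3
      refine ⟨h2, h3, ?_⟩
      have := w.2.1
      rw [hw] at this
      exact this
    · rw [hw] at h1
      exact absurd (congrArg Prod.fst h1) (by simp)
  have hTanti : ∀ a ∈ T, ∀ b ∈ T, a ≠ b → ¬ a ≤ b := by
    intro a ha b hb hab hle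
    obtain ⟨wa, hwaS, hwa⟩ := (hmemT a).mp ha
    obtain ⟨wb, hwbS, hwb⟩ := (hmemT b).mp hb
    have hne : wa ≠ wb := by
      intro hc
      rw [hc, hwb] at hwa
      exact hab (congrArg Prod.snd hwa).symm
    exact hSanti wa hwaS wb hwbS hne ((Blowup.le_def wa wb).mpr (by rw [hwa, hwb]; exact ⟨le_rfl, hle⟩))
  -- whether the true element is present
  by_cases htrue : ∃ w ∈ S, w.val.1 = true
  · -- case with [α,⊥] ∈ S
    obtain ⟨w₀, hw₀S, hw₀1⟩ := htrue
    have hw₀val : w₀.val = (true, (⊥:L)) := by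
      rcases hSN (Finset.mem_coe.mpr hw₀S) with ⟨h1, _⟩ | ⟨h1, _⟩
      · rw [hw₀1] at h1; exact absurd h1 (by simp)
      · exact h1
    have hαN : α ∈ N := by
      rcases hSN (Finset.mem_coe.mpr hw₀S) with ⟨h1, _⟩ | ⟨_, h2⟩
      · rw [hw₀1] at h1; exact absurd h1 (by simp)
      · exact h2
    have htrueuniq : ∀ w ∈ S, w.val.1 = true → w = w₀ := by
      intro w hwS hw1
      rcases hSN (Finset.mem_coe.mpr hwS) with ⟨h1, _⟩ | ⟨h1, _⟩
      · rw [hw1] at h1; exact absurd h1 (by simp)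
      · exact Subtype.ext (h1.trans hw₀val.symm)
    have hTcard : T.card = S.card - 1 := by
      have : S.filter (fun w => w.val.1 = false) = S.erase w₀ := by
        ext w
        simp only [Finset.mem_filter, Finset.mem_erase]
        constructor
        · rintro ⟨hwS, hw1⟩
          refine ⟨fun hc => ?_, hwS⟩
          rw [hc, hw₀val] at hw1; exact absurd hw1 (by simp)
        · rintro ⟨hne, hwS⟩
          refine ⟨hwS, ?_⟩
          cases hb : w.val.1
          · rfl
          · exact absurd (htrueuniq w hwS hb) hne
      rw [hTdef, this, Finset.card_image_of_injOn, Finset.card_erase_of_mem hw₀S]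
      intro a ha b hb hab
      have ha' := (Finset.mem_erase.mp ha).2
      have hb' := (Finset.mem_erase.mp hb).2
      have ha1 : a.val.1 = false := by
        cases h : a.val.1
        · rfl
        · exact absurd (htrueuniq a ha' h) (Finset.mem_erase.mp ha).1
      have hb1 : b.val.1 = false := by
        cases h : b.val.1
        · rfl
        · exact absurd (htrueuniq b hb' h) (Finset.mem_erase.mp hb).1
      exact Subtype.ext (Prod.ext (ha1.trans hb1.symm) hab)
    have hTne : T.Nonempty := by
      rw [← Finset.card_pos, hTcard]; omega
    -- j' = LUB of T
    obtain ⟨j', hj'lub, hj'G⟩ : ∃ j', IsLUB (↑T : Set L) j' ∧ (2 ≤ T.card → j' ∉ G) := by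
      rcases eq_or_lt_of_le (Finset.one_le_card.mpr hTne) with h1 | h2
      · obtain ⟨t, ht⟩ := Finset.card_eq_one.mp h1.symm
        refine ⟨t, by rw [ht]; simp, fun hc => by rw [← h1] at hc; omega⟩
      · obtain ⟨w, hw1, hw2⟩ := hN.2 T (fun t ht => (hTN t (Finset.mem_coe.mp ht)).1) h2 hTanti
        exact ⟨w, hw1, fun _ => hw2⟩
    have hαj' : ¬ α ≤ j' := by
      rcases eq_or_lt_of_le (Finset.one_le_card.mpr hTne) with h1 | h2
      · obtain ⟨t, ht⟩ := Finset.card_eq_one.mp h1.symm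
        have : t = j' := by
          rw [ht] at hj'lub
          simp only [Finset.coe_singleton] at hj'lub
          exact le_antisymm (hj'lub.1 rfl) (hj'lub.2 (by simp))
        rw [← this]
        exact (hTN t (ht ▸ Finset.mem_singleton_self t)).2.2
      · intro hαle
        have hKey := maxBelow_eq_of_nested hG hN T
          (fun t ht => (hTN t (Finset.mem_coe.mp ht)).1) h2 hTanti hj'lub
        have hαmem : α ∈ maxBelow G j' := by
          refine ⟨hαG, hαle, fun h hh hhj' hαh => hαmax h hh hαh⟩
        rw [hKey] at hαmem
        exact (hTN α (Finset.mem_coe.mp hαmem)).2.1 rfl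
    -- join of α and j' exists
    have hub : (upperBounds ({α, j'} : Set L)).Nonempty := by
      set T₁ : Finset L := T.filter (fun y => ¬ y ≤ α) with hT₁def
      by_cases hT₁ne : T₁.Nonempty
      · set Tstar : Finset L := insert α T₁ with hTstardef
        have hαT₁ : α ∉ T₁ := by
          intro hc
          exact (hTN α (Finset.mem_filter.mp hc).1).2.1 rfl
        have hcardstar : 2 ≤ Tstar.card := by
          rw [hTstardef, Finset.card_insert_of_notMem hαT₁]
          have := Finset.one_le_card.mpr hT₁ne; omega
        obtain ⟨jstar, hjstar, _⟩ := hN.2 Tstar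
          (by
            intro t ht
            rcases Finset.mem_insert.mp (Finset.mem_coe.mp ht) with rfl | ht'
            · exact hαN
            · exact (hTN t (Finset.mem_filter.mp ht').1).1)
          hcardstar
          (by
            intro a ha b hb hab hle
            rcases Finset.mem_insert.mp ha with rfl | ha'
            · rcases Finset.mem_insert.mp hb with rfl | hb'
              · exact hab rfl
              · exact (hTN b (Finset.mem_filter.mp hb').1).2.2 hle
            · rcases Finset.mem_insert.mp hb with rfl | hb'
              · exact (Finset.mem_filter.mp ha').2 hle
              · exact hTanti a (Finset.mem_filter.mp ha').1 b (Finset.mem_filter.mp hb').1 hab hle)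
        refine ⟨jstar, ?_⟩
        rintro x (rfl | hx)
        · exact hjstar.1 (Finset.mem_coe.mpr (Finset.mem_insert_self _ _))
        · simp only [Set.mem_singleton_iff] at hx
          subst hx
          apply hj'lub.2
          intro y hy
          by_cases hyα : y ≤ α
          · exact hyα.trans (hjstar.1 (Finset.mem_coe.mpr (Finset.mem_insert_self _ _)))
          · exact hjstar.1 (Finset.mem_coe.mpr
              (Finset.mem_insert_of_mem (Finset.mem_filter.mpr ⟨Finset.mem_coe.mp hy, hyα⟩)))
      · refine ⟨α, ?_⟩
        rintro x (rfl | hx)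
        · exact le_rfl
        · simp only [Set.mem_singleton_iff] at hx
          subst hx
          apply hj'lub.2
          intro y hy
          by_contra hyα
          exact hT₁ne ⟨y, Finset.mem_filter.mpr ⟨Finset.mem_coe.mp hy, hyα⟩⟩
    obtain ⟨jα, hjα⟩ := exists_isLUB_of_ub hub
    -- the LUB of S
    refine ⟨Blowup.mk2 j' hαj' ⟨jα, hjα⟩, ⟨?_, ?_⟩, ?_⟩
    · intro w hwS
      rw [Blowup.le_def]
      cases hb : w.val.1
      · constructor
        · simp [Blowup.mk2, hb]
        · exact hj'lub.1 (Finset.mem_coe.mpr ((hmemT w.val.2).mpr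
            ⟨w, Finset.mem_coe.mp hwS, Prod.ext hb rfl⟩))
      · have := htrueuniq w (Finset.mem_coe.mp hwS) hb
        rw [this]
        constructor
        · simp [Blowup.mk2, hw₀val]
        · rw [hw₀val]; exact bot_le
    · intro z hz
      rw [Blowup.le_def]
      constructor
      · have := hz (Finset.mem_coe.mpr hw₀S)
        rw [Blowup.le_def, hw₀val] at this
        simpa [Blowup.mk2] using this.1
      · show j' ≤ z.val.2
        apply hj'lub.2
        intro y hy
        obtain ⟨w, hwS, hw⟩ := (hmemT y).mp (Finset.mem_coe.mp hy)
        have := hz (Finset.mem_coe.mpr hwS)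
        rw [Blowup.le_def, hw] at this
        exact this.2
    · rintro (⟨h1, _, _⟩ | ⟨h1, _⟩)
      · exact absurd h1 (by simp [Blowup.mk2])
      · have : j' = ⊥ := congrArg Prod.snd h1
        obtain ⟨t, ht⟩ := hTne
        have htb : t ≤ (⊥:L) := this ▸ hj'lub.1 (Finset.mem_coe.mpr ht)
        exact hG.1 t (hN.1 (hTN t ht).1) (le_antisymm htb bot_le)
  · -- no true element in S
    push_neg at htrue
    have hfalse : ∀ w ∈ S, w.val.1 = false := by
      intro w hw
      cases h : w.val.1
      · rfl
      · exact absurd h (htrue w hw)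
    have hTcard : T.card = S.card := by
      have hfil : S.filter (fun w => w.val.1 = false) = S :=
        Finset.filter_true_of_mem hfalse
      rw [hTdef, hfil, Finset.card_image_of_injOn]
      intro a ha b hb hab
      exact Subtype.ext (Prod.ext ((hfalse a ha).trans (hfalse b hb).symm) hab)
    obtain ⟨j, hjlub, hjG⟩ := hN.2 T (fun t ht => (hTN t (Finset.mem_coe.mp ht)).1)
      (by omega) hTanti
    have hαj : ¬ α ≤ j := by
      intro hαle
      have hKey := maxBelow_eq_of_nested hG hN T
        (fun t ht => (hTN t (Finset.mem_coe.mp ht)).1) (by omega) hTanti hjlub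
      have hαmem : α ∈ maxBelow G j :=
        ⟨hαG, hαle, fun h hh hhj hαh => hαmax h hh hαh⟩
      rw [hKey] at hαmem
      exact (hTN α (Finset.mem_coe.mp hαmem)).2.1 rfl
    refine ⟨Blowup.mk1 j hαj, ⟨?_, ?_⟩, ?_⟩
    · intro w hwS
      rw [Blowup.le_def]
      constructor
      · simp [Blowup.mk1, hfalse w (Finset.mem_coe.mp hwS)]
      · exact hjlub.1 (Finset.mem_coe.mpr ((hmemT w.val.2).mpr
          ⟨w, Finset.mem_coe.mp hwS, Prod.ext (hfalse w (Finset.mem_coe.mp hwS)) rfl⟩))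
    · intro z hz
      rw [Blowup.le_def]
      constructor
      · simp [Blowup.mk1]
      · show j ≤ z.val.2
        apply hjlub.2
        intro y hy
        obtain ⟨w, hwS, hw⟩ := (hmemT y).mp (Finset.mem_coe.mp hy)
        have := hz (Finset.mem_coe.mpr hwS)
        rw [Blowup.le_def, hw] at this
        exact this.2
    · rintro (⟨_, h2, _⟩ | ⟨h1, _⟩)
      · exact hjG h2
      · exact absurd (congrArg Prod.fst h1) (by simp [Blowup.mk1])

end Main
section Reverse
variable {L : Type u}

/-- Inverse of `liftSet`. -/
def dropSet [PartialOrder L] [OrderBot L] (α : L) (M : Set (Blowup L α)) : Set L :=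
  {y | (∃ w ∈ M, w.val = (false, y)) ∨ (y = α ∧ ∃ w ∈ M, w.val = (true, (⊥:L)))}

lemma drop_nested [SemilatticeInf L] [Fintype L] [OrderBot L] {G : Set L}
    (hG : IsBuilding G) {α : L} (hαG : α ∈ G) (hαmax : ∀ g ∈ G, α ≤ g → g = α)
    {M : Set (Blowup L α)} (hM : IsNested (liftSet α G) M) :
    IsNested G (dropSet α M) := by
  classical
  have hαbot : α ≠ ⊥ := hG.1 α hαG
  set N := dropSet α M with hNdef
  have hNsubG : N ⊆ G := by
    rintro y (⟨w, hwM, hw⟩ | ⟨rfl, _⟩)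
    · rcases hM.1 hwM with ⟨_, h2, _⟩ | ⟨h1, _⟩
      · rwa [hw] at h2
      · rw [hw] at h1
        exact absurd (congrArg Prod.fst h1) (by simp)
    · exact hαG
  refine ⟨hNsubG, ?_⟩
  intro T hTN hTcard hTanti
  have hTbot : ∀ t ∈ T, t ≠ (⊥:L) := fun t ht => hG.1 t (hNsubG (hTN (Finset.mem_coe.mpr ht)))
  have hwbot : ¬ α ≤ (⊥:L) := fun h => hαbot (le_antisymm h bot_le)
  set wα : Blowup L α := Blowup.mk2 ⊥ hwbot ⟨α, isLUB_pair_bot α⟩ with hwαdef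
  set f : L → Blowup L α := fun t =>
    if h : ¬ α ≤ t then Blowup.mk1 t h else wα with hfdef
  have hfα : f α = wα := by
    rw [hfdef]; simp
  have hfne : ∀ t ∈ T, t ≠ α → (f t).val = (false, t) := by
    intro t ht htα
    have h : ¬ α ≤ t := fun hle => htα ((hαmax t (hNsubG (hTN (Finset.mem_coe.mpr ht))) hle) ▸ rfl)
    rw [hfdef]
    simp only [dif_pos h]
    rfl
  -- membership of lifts in M
  have hfM : ∀ t ∈ T, f t ∈ M := by
    intro t ht
    have htN : t ∈ N := hTN (Finset.mem_coe.mpr ht)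
    by_cases htα : t = α
    · rcases htN with ⟨w, hwM, hw⟩ | ⟨_, w, hwM, hw⟩
      · exfalso
        have h := w.2.1
        rw [hw] at h
        exact h (le_of_eq htα.symm)
      · have hft : f t = wα := by rw [htα, hfα]
        rw [hft]
        have : wα = w := Subtype.ext (by rw [hw]; rfl)
        rwa [this]
    · rcases htN with ⟨w, hwM, hw⟩ | ⟨h1, _⟩
      · have : f t = w := Subtype.ext (by rw [hfne t ht htα, hw])
        rwa [this]
      · exact absurd h1 htα
  -- injectivity on T
  have hfinj : ∀ a ∈ T, ∀ b ∈ T, f a = f b → a = b := by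
    intro a ha b hb hab
    by_cases haα : a = α
    · by_cases hbα : b = α
      · rw [haα, hbα]
      · exfalso
        have h2 := hfne b hb hbα
        rw [← hab, haα, hfα] at h2
        exact absurd (congrArg Prod.fst h2) (by simp [hwαdef, Blowup.mk2])
    · by_cases hbα : b = α
      · exfalso
        have h1 := hfne a ha haα
        rw [hab, hbα, hfα] at h1
        exact absurd (congrArg Prod.fst h1) (by simp [hwαdef, Blowup.mk2])
      · have h1 := hfne a ha haα
        have h2 := hfne b hb hbα
        rw [hab, h2] at h1
        exact (congrArg Prod.snd h1).symm
  set S : Finset (Blowup L α) := T.image f with hSdef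
  have hScard : S.card = T.card := Finset.card_image_of_injOn hfinj
  have hSM : (↑S : Set (Blowup L α)) ⊆ M := by
    intro w hw
    obtain ⟨t, ht, rfl⟩ := Finset.mem_image.mp (Finset.mem_coe.mp hw)
    exact hfM t ht
  have hSanti : ∀ a ∈ S, ∀ b ∈ S, a ≠ b → ¬ a ≤ b := by
    intro a ha b hb hab hle
    obtain ⟨s, hs, rfl⟩ := Finset.mem_image.mp ha
    obtain ⟨t, ht, rfl⟩ := Finset.mem_image.mp hb
    have hst : s ≠ t := fun hc => hab (hc ▸ rfl)
    rw [Blowup.le_def] at hle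
    by_cases hsα : s = α
    · by_cases htα : t = α
      · exact hst (hsα.trans htα.symm)
      · have hfs : f s = wα := by rw [hsα, hfα]
        have h2 := hfne t ht htα
        rw [hfs] at hle
        have hft1 : (f t).val.1 = false := congrArg Prod.fst h2
        rw [hft1] at hle
        exact absurd hle.1 (by simp [hwαdef, Blowup.mk2])
    · have h1 := hfne s hs hsα
      by_cases htα : t = α
      · have hft : f t = wα := by rw [htα, hfα]
        rw [hft] at hle
        have hsle : s ≤ (⊥:L) := by
          have h3 := hle.2
          rw [congrArg Prod.snd h1] at h3
          simpa [hwαdef, Blowup.mk2] using h3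
        exact hTbot s hs (le_antisymm hsle bot_le)
      · have h2 := hfne t ht htα
        have : s ≤ t := by
          have h3 := hle.2
          rwa [congrArg Prod.snd h1, congrArg Prod.snd h2] at h3
        exact hTanti s hs t ht hst this
  obtain ⟨what, hwhatlub, hwhatG⟩ := hM.2 S hSM (by omega) hSanti
  by_cases hαT : α ∈ T
  · -- α ∈ T : use that b must be true, then the join of α and z dominates T
    have hwαS : wα ∈ S := hfα ▸ Finset.mem_image_of_mem f hαT
    have hbtrue : what.val.1 = true := by
      have h0 := hwhatlub.1 (Finset.mem_coe.mpr hwαS)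
      rw [Blowup.le_def] at h0
      have h1 : true ≤ what.val.1 := by
        have := h0.1
        simpa [hwαdef, Blowup.mk2] using this
      exact le_antisymm (Bool.le_true _) h1
    obtain ⟨jα, hjα⟩ := what.2.2 hbtrue
    have hjαub : jα ∈ upperBounds (↑T : Set L) := by
      intro t ht
      by_cases htα : t = α
      · subst htα; exact hjα.1 (Set.mem_insert _ _)
      · have h1 := hwhatlub.1 (Finset.mem_coe.mpr (Finset.mem_image_of_mem f (Finset.mem_coe.mp ht)))
        rw [Blowup.le_def, hfne t (Finset.mem_coe.mp ht) htα] at h1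
        exact h1.2.trans (hjα.1 (Set.mem_insert_of_mem _ rfl))
    obtain ⟨j, hjlub⟩ := exists_isLUB_of_ub ⟨jα, hjαub⟩
    refine ⟨j, hjlub, ?_⟩
    intro hjG
    have hαj : α ≤ j := hjlub.1 (Finset.mem_coe.mpr hαT)
    have : j = α := hαmax j hjG hαj
    obtain ⟨t, ht, htα⟩ : ∃ t ∈ T, t ≠ α := by
      by_contra hc
      push_neg at hc
      have : T ⊆ {α} := fun t ht => Finset.mem_singleton.mpr (hc t ht)
      have := Finset.card_le_card this
      simp at this; omega
    exact hTanti t ht α hαT htα (this ▸ hjlub.1 (Finset.mem_coe.mpr ht))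
  · -- α ∉ T : all lifts are false, z is an upper bound
    have hzub : what.val.2 ∈ upperBounds (↑T : Set L) := by
      intro t ht
      have htα : t ≠ α := fun hc => hαT (hc ▸ Finset.mem_coe.mp ht)
      have h1 := hwhatlub.1 (Finset.mem_coe.mpr (Finset.mem_image_of_mem f (Finset.mem_coe.mp ht)))
      rw [Blowup.le_def, hfne t (Finset.mem_coe.mp ht) htα] at h1
      exact h1.2
    obtain ⟨j, hjlub⟩ := exists_isLUB_of_ub ⟨what.val.2, hzub⟩
    refine ⟨j, hjlub, ?_⟩
    intro hjG
    have hjz : j ≤ what.val.2 := hjlub.2 hzub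
    have hαj : ¬ α ≤ j := fun hc => what.2.1 (hc.trans hjz)
    have hjα' : j ≠ α := fun hc => hαj (hc ▸ le_rfl)
    -- the lifted j is an upper bound of S, so what ≤ it, but also ≥, so equal; contradiction
    set jhat : Blowup L α := Blowup.mk1 j hαj with hjhatdef
    have hjhatub : jhat ∈ upperBounds (↑S : Set (Blowup L α)) := by
      intro w hw
      obtain ⟨t, ht, rfl⟩ := Finset.mem_image.mp (Finset.mem_coe.mp hw)
      have htα : t ≠ α := fun hc => hαT (hc ▸ ht)
      rw [Blowup.le_def, hfne t ht htα]
      exact ⟨by simp [hjhatdef, Blowup.mk1], hjlub.1 (Finset.mem_coe.mpr ht)⟩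
    have h1 : what ≤ jhat := hwhatlub.2 hjhatub
    have h2 : jhat ≤ what := by
      rw [Blowup.le_def]
      constructor
      · simp [hjhatdef, Blowup.mk1]
      · exact hjz
    have : what = jhat := le_antisymm h1 h2
    apply hwhatG
    rw [this]
    exact Or.inl ⟨rfl, hjG, hjα'⟩

end Reverse
section RoundTrip
variable {L : Type u}

lemma drop_lift [SemilatticeInf L] [Fintype L] [OrderBot L] {G : Set L}
    (hG : IsBuilding G) {α : L} (hαG : α ∈ G) (hαmax : ∀ g ∈ G, α ≤ g → g = α)
    {N : Set L} (hN : N ⊆ G) : dropSet α (liftSet α N) = N := by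
  have hαbot : α ≠ ⊥ := hG.1 α hαG
  ext y
  constructor
  · rintro (⟨w, hwM, hw⟩ | ⟨rfl, w, hwM, hw⟩)
    · rcases hwM with ⟨_, h2, _⟩ | ⟨h1, _⟩
      · rwa [hw] at h2
      · rw [hw] at h1
        exact absurd (congrArg Prod.fst h1) (by simp)
    · rcases hwM with ⟨h1, _, _⟩ | ⟨_, h2⟩
      · rw [hw] at h1
        exact absurd h1 (by simp)
      · exact h2
  · intro hy
    by_cases hyα : y = α
    · right
      refine ⟨hyα, Blowup.mk2 ⊥ (fun h => hαbot (le_antisymm h bot_le)) ⟨α, isLUB_pair_bot α⟩,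
        Or.inr ⟨rfl, hyα ▸ hy⟩, rfl⟩
    · left
      have hαy : ¬ α ≤ y := fun hle => hyα ((hαmax y (hN hy) hle) ▸ rfl)
      exact ⟨Blowup.mk1 y hαy, Or.inl ⟨rfl, hy, hyα⟩, rfl⟩

lemma lift_drop [SemilatticeInf L] [Fintype L] [OrderBot L] {G : Set L}
    {α : L} {M : Set (Blowup L α)} (hM : M ⊆ liftSet α G) :
    liftSet α (dropSet α M) = M := by
  ext w
  constructor
  · rintro (⟨h1, h2, h3⟩ | ⟨h1, h2⟩)
    · rcases h2 with ⟨w', hw'M, hw'⟩ | ⟨hc, _⟩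
      · have : w = w' := Subtype.ext (by rw [hw']; exact Prod.ext h1 rfl)
        rwa [this]
      · exact absurd hc h3
    · rcases h2 with ⟨w', _, hw'⟩ | ⟨_, w', hw'M, hw'⟩
      · exfalso
        have h := w'.2.1
        rw [hw'] at h
        exact h le_rfl
      · have : w = w' := Subtype.ext (h1.trans hw'.symm)
        rwa [this]
  · intro hwM
    rcases hM hwM with ⟨h1, h2, h3⟩ | ⟨h1, _⟩
    · exact Or.inl ⟨h1, Or.inl ⟨w, hwM, Prod.ext h1 rfl⟩, h3⟩
    · exact Or.inr ⟨h1, Or.inr ⟨rfl, w, hwM, h1⟩⟩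

end RoundTrip


/-- for `α` maximal in a building set `G`, replacing `α` by `[α, ⊥]` is a
bijection between the nested subsets of `G` and the nested subsets of the building set
`G̃ = (G \ {α}) ∪ {[α, ⊥]}` of the blowup. -/
theorem nested_sets_biject_under_blowup {L : Type u} [SemilatticeInf L] [Fintype L]
    [OrderBot L] (G : Set L) (hG : IsBuilding G) (α : L) (hαG : α ∈ G)
    (hαmax : ∀ g ∈ G, α ≤ g → g = α) :
    Set.BijOn (liftSet α) {N : Set L | IsNested G N}
      {M : Set (Blowup L α) | IsNested (liftSet α G) M} := by
  refine ⟨?_, ?_, ?_⟩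
  · intro N hN
    exact lift_nested hG hαG hαmax hN
  · intro N1 h1 N2 h2 heq
    have e1 := drop_lift hG hαG hαmax h1.1
    have e2 := drop_lift hG hαG hαmax h2.1
    rw [← e1, ← e2, heq]
  · intro M hM
    refine ⟨dropSet α M, drop_nested hG hαG hαmax hM, lift_drop hM.1⟩
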